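/- Let Φ ∈ ℝ^{np×n} be (n-stacked) q-error correctable, x ∈ ℝⁿ, e ∈ Σ_qⁿ, v ∈ ℝ^{np} with ‖v_i‖₂ ≤ v_max for all blocks i, and ẑ = Φx + e + v. Fix an integer r with q ≤ r ≤ 2q and set v'_max := ϑ_{p,q,r}(Φ)·v_max. Then any minimizer x̂ over χ ∈ F_{p,r}(ẑ) of the count |{i ∈ {1,…,p} : ‖ẑ_i − Φ_{Γᵢⁿ}χ‖₂ > v'_max}| satisfies ‖x̂ − x‖₂ ≤ κ^c_{p,q,r}(Φ)·v_max, where κ^c_{p,q,r}(Φ) := (ϑ_{p,q,r}(Φ) + 1)√(p−2q)/ρ_{p,2q}(Φ). -/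

import Mathlib

open scoped Classical
open Finset Matrix

noncomputable section

namespace SecureEst

variable {n p : ℕ}

/-- The `i`-th `n`-block of an `n`-stacked vector. -/
def blk (z : Fin p × Fin n → ℝ) (i : Fin p) : Fin n → ℝ := fun j => z (i, j)

/-- The `n`-stacked support of a stacked vector. -/
def blockSupp (z : Fin p × Fin n → ℝ) : Finset (Fin p) :=
  Finset.univ.filter fun i => blk z i ≠ 0

/-- The `n`-stacked ℓ⁰ "norm": number of nonzero blocks. -/
def l0n (z : Fin p × Fin n → ℝ) : ℕ := (blockSupp z).card

/-- `n`-stacked `q`-sparsity: membership in `Σ_qⁿ`. -/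
def Sparse (q : ℕ) (z : Fin p × Fin n → ℝ) : Prop := l0n z ≤ q

/-- Euclidean (ℓ²) norm of a real vector. -/
def enorm {m : Type*} [Fintype m] (x : m → ℝ) : ℝ := Real.sqrt (∑ i, x i ^ 2)

/-- `Φ_{Λⁿ}`: zero out the row-blocks of `Φ` outside `Λ`. -/
def zeroB (Λ : Finset (Fin p)) (Φ : Matrix (Fin p × Fin n) (Fin n) ℝ) :
    Matrix (Fin p × Fin n) (Fin n) ℝ :=
  fun ij k => if ij.1 ∈ Λ then Φ ij k else 0

/-- `z_{Λⁿ}`: zero out the blocks of a stacked vector outside `Λ`. -/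
def zeroV (Λ : Finset (Fin p)) (z : Fin p × Fin n → ℝ) : Fin p × Fin n → ℝ :=
  fun ij => if ij.1 ∈ Λ then z ij else 0

/-- `Φ_{Γᵢⁿ}`: the `i`-th row-block of `Φ`. -/
def rowBlk (Φ : Matrix (Fin p × Fin n) (Fin n) ℝ) (i : Fin p) :
    Matrix (Fin n) (Fin n) ℝ := fun j k => Φ (i, j) k

/-- Moore–Penrose pseudoinverse (full-column-rank formula `(MᵀM)⁻¹Mᵀ`). -/
def pinv {m k : Type*} [Fintype m] [Fintype k] [DecidableEq k]
    (M : Matrix m k ℝ) : Matrix k m ℝ := (Mᵀ * M)⁻¹ * Mᵀ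

/-- Spectral norm (largest singular value) of a real matrix. -/
def specNorm {m k : Type*} [Fintype m] [Fintype k] (M : Matrix m k ℝ) : ℝ :=
  sSup {r | ∃ x : k → ℝ, enorm x = 1 ∧ r = enorm (M.mulVec x)}

/-- Minimum singular value of a (tall) real matrix. -/
def sigmaMin {m k : Type*} [Fintype m] [Fintype k] (M : Matrix m k ℝ) : ℝ :=
  sInf {r | ∃ x : k → ℝ, enorm x = 1 ∧ r = enorm (M.mulVec x)}

/-- `(n-stacked) q`-error detectability. -/
def ErrDetectable (Φ : Matrix (Fin p × Fin n) (Fin n) ℝ) (q : ℕ) : Prop :=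
  ∀ x x' : Fin n → ℝ, ∀ e : Fin p × Fin n → ℝ,
    Sparse q e → Φ.mulVec x + e = Φ.mulVec x' → x = x'

/-- `(n-stacked) q`-error correctability. -/
def ErrCorrectable (Φ : Matrix (Fin p × Fin n) (Fin n) ℝ) (q : ℕ) : Prop :=
  ∀ x₁ x₂ : Fin n → ℝ, ∀ e₁ e₂ : Fin p × Fin n → ℝ,
    Sparse q e₁ → Sparse q e₂ →
      Φ.mulVec x₁ + e₁ = Φ.mulVec x₂ + e₂ → x₁ = x₂

/-- `(n-stacked)` cospark. -/
def cosparkN (Φ : Matrix (Fin p × Fin n) (Fin n) ℝ) : ℕ :=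
  sInf {m : ℕ | ∃ x : Fin n → ℝ, x ≠ 0 ∧ m = l0n (Φ.mulVec x)}

/-- `ρ_{p,q}(Φ)`. -/
def rho (Φ : Matrix (Fin p × Fin n) (Fin n) ℝ) (q : ℕ) : ℝ :=
  sInf {r | ∃ Λ : Finset (Fin p), Λ.card = p - q ∧ r = sigmaMin (zeroB Λ Φ)}

/-- `η_{p,q}(Φ)`. -/
def eta (Φ : Matrix (Fin p × Fin n) (Fin n) ℝ) (q : ℕ) : ℝ :=
  sSup {r | ∃ Λ : Finset (Fin p), Λ.card = p - q ∧
    ∃ i : Fin p, i ∉ Λ ∧ r = specNorm (rowBlk Φ i * pinv (zeroB Λ Φ))}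

/-- `κ^d_{p,q}(Φ)`. -/
def kappaD (Φ : Matrix (Fin p × Fin n) (Fin n) ℝ) (q : ℕ) : ℝ :=
  (Real.sqrt (p : ℝ) + 1) * Real.sqrt ((p - q : ℕ) : ℝ) / rho Φ q

/-- `κ^e_{p,q}(Φ)`. -/
def kappaE (Φ : Matrix (Fin p × Fin n) (Fin n) ℝ) (q : ℕ) : ℝ :=
  (eta Φ q * Real.sqrt ((p - q : ℕ) : ℝ) + 1) * (Real.sqrt (p : ℝ) + 1)

/-- The finite candidate set `F_{p,r}(ẑ)`. -/
def Fset (Φ : Matrix (Fin p × Fin n) (Fin n) ℝ) (r : ℕ) (z : Fin p × Fin n → ℝ) :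
    Set (Fin n → ℝ) :=
  {χ | ∃ Λ : Finset (Fin p), Λ.card = p - r ∧
    χ = (pinv (zeroB Λ Φ)).mulVec (zeroV Λ z)}

/-- `η'_{p,q,r}(Φ)`. -/
def eta' (Φ : Matrix (Fin p × Fin n) (Fin n) ℝ) (q r : ℕ) : ℝ :=
  sSup {a | ∃ Λ : Finset (Fin p), Λ.card = p - q ∧
    a = sInf {b | ∃ Λ' : Finset (Fin p), Λ' ⊆ Λ ∧ Λ'.card = p - r ∧
      b = sSup {c | ∃ i ∈ Λ \ Λ',
        c = specNorm (rowBlk Φ i * pinv (zeroB Λ' Φ))}}}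

/-- `ϑ_{p,q,r}(Φ)`. -/
def theta (Φ : Matrix (Fin p × Fin n) (Fin n) ℝ) (q r : ℕ) : ℝ :=
  max (eta' Φ q r * Real.sqrt ((p - r : ℕ) : ℝ) + 1) (Real.sqrt ((p - r : ℕ) : ℝ))

/-- `κ^c_{p,q,r}(Φ)`. -/
def kappaC (Φ : Matrix (Fin p × Fin n) (Fin n) ℝ) (q r : ℕ) : ℝ :=
  (theta Φ q r + 1) * Real.sqrt ((p - 2 * q : ℕ) : ℝ) / rho Φ (2 * q)

/-- `κ^{c'}_{p,q,r}(Φ)`. -/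
def kappaC' (Φ : Matrix (Fin p × Fin n) (Fin n) ℝ) (q r : ℕ) : ℝ :=
  (theta Φ q r - 1) / sSup {c | ∃ i : Fin p, c = specNorm (rowBlk Φ i)}

/-- Stacked observability matrix `G` with row-blocks `Gᵢ = [cᵢᵀ (cᵢA)ᵀ ⋯ (cᵢAⁿ⁻¹)ᵀ]ᵀ`. -/
def obsG (A : Matrix (Fin n) (Fin n) ℝ) (C : Matrix (Fin p) (Fin n) ℝ) :
    Matrix (Fin p × Fin n) (Fin n) ℝ :=
  fun ij k => (C * A ^ (ij.2 : ℕ)) ij.1 k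

/-- `C_Λ`: zero out the rows of `C` outside `Λ`. -/
def zeroRows (Λ : Finset (Fin p)) (C : Matrix (Fin p) (Fin n) ℝ) :
    Matrix (Fin p) (Fin n) ℝ :=
  fun i k => if i ∈ Λ then C i k else 0

/-- Observability of the pair `(A, C)`: the observability matrix has full column rank. -/
def Observable (A : Matrix (Fin n) (Fin n) ℝ) (C : Matrix (Fin p) (Fin n) ℝ) : Prop :=
  (obsG A C).rank = n

/-- `q`-redundant observability. -/
def RedObservable (A : Matrix (Fin n) (Fin n) ℝ) (C : Matrix (Fin p) (Fin n) ℝ)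
    (q : ℕ) : Prop :=
  ∀ Λ : Finset (Fin p), p - q ≤ Λ.card → Observable A (zeroRows Λ C)

/-- Euclidean norm of a complex vector. -/
def enormC {m : Type*} [Fintype m] (v : m → ℂ) : ℝ :=
  Real.sqrt (∑ i, ‖v i‖ ^ 2)

/-- The set `V(A)` of normalized complex eigenvectors of a real matrix `A`. -/
def eigSet (A : Matrix (Fin n) (Fin n) ℝ) : Set (Fin n → ℂ) :=
  {v | (∃ μ : ℂ, (A.map Complex.ofReal).mulVec v = μ • v) ∧ enormC v = 1}

/-- ℓ⁰ norm of a complex vector. -/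
def l0C (y : Fin p → ℂ) : ℕ := (Finset.univ.filter fun i => y i ≠ 0).card

/-- `n`-stacked ℓ⁰ norm of a complex stacked vector. -/
def l0nC (z : Fin p × Fin n → ℂ) : ℕ :=
  (Finset.univ.filter fun i => (fun j => z (i, j)) ≠ (0 : Fin n → ℂ)).card

/-- The dynamic security index `α_d(A, C)`. -/
def alphaD (A : Matrix (Fin n) (Fin n) ℝ) (C : Matrix (Fin p) (Fin n) ℝ) : ℕ :=
  sInf {m : ℕ | ∃ v ∈ eigSet A, m = l0C ((C.map Complex.ofReal).mulVec v)}

end SecureEst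

namespace SecureEst

variable {n p : ℕ}

/-! ### Auxiliary lemmas for the proof -/

lemma enorm_nonneg' {m : Type*} [Fintype m] (x : m → ℝ) : 0 ≤ enorm x := Real.sqrt_nonneg _

lemma enorm_sq' {m : Type*} [Fintype m] (x : m → ℝ) : enorm x ^ 2 = ∑ i, x i ^ 2 :=
  Real.sq_sqrt (Finset.sum_nonneg fun _ _ => sq_nonneg _)

lemma enorm_zero' {m : Type*} [Fintype m] : enorm (0 : m → ℝ) = 0 := by simp [enorm]

lemma enorm_eq' {m : Type*} [Fintype m] (x : m → ℝ) :
    enorm x = ‖(WithLp.equiv 2 (m → ℝ)).symm x‖ := by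
  rw [EuclideanSpace.norm_eq]; simp [enorm, sq_abs]

lemma enorm_add_le' {m : Type*} [Fintype m] (x y : m → ℝ) :
    enorm (x + y) ≤ enorm x + enorm y := by
  rw [enorm_eq', enorm_eq', enorm_eq']
  exact norm_add_le ((WithLp.equiv 2 (m → ℝ)).symm x) ((WithLp.equiv 2 (m → ℝ)).symm y)

lemma enorm_sub_le' {m : Type*} [Fintype m] (x y : m → ℝ) :
    enorm (x - y) ≤ enorm x + enorm y := by
  rw [enorm_eq', enorm_eq', enorm_eq']
  exact norm_sub_le ((WithLp.equiv 2 (m → ℝ)).symm x) ((WithLp.equiv 2 (m → ℝ)).symm y)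

lemma enorm_smul' {m : Type*} [Fintype m] (c : ℝ) (x : m → ℝ) :
    enorm (c • x) = |c| * enorm x := by
  rw [enorm_eq', enorm_eq']
  rw [show (WithLp.equiv 2 (m → ℝ)).symm (c • x) = c • (WithLp.equiv 2 (m → ℝ)).symm x from rfl]
  simp [norm_smul]

lemma eq_zero_of_enorm_eq_zero {m : Type*} [Fintype m] {x : m → ℝ} (h : enorm x = 0) :
    x = 0 := by
  rw [enorm_eq'] at h
  have := norm_eq_zero.mp h
  funext i
  simpa using congrArg (fun y => (WithLp.equiv 2 (m → ℝ)) y i) this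

lemma unit_of_ne_zero {k : Type*} [Fintype k] {x : k → ℝ} (hx : x ≠ 0) :
    enorm ((enorm x)⁻¹ • x) = 1 := by
  have h0 : enorm x ≠ 0 := fun h => hx (eq_zero_of_enorm_eq_zero h)
  rw [enorm_smul', abs_inv, abs_of_nonneg (enorm_nonneg' x), inv_mul_cancel₀ h0]

lemma exists_unit {k : Type*} [Fintype k] [Nonempty k] :
    ∃ x : k → ℝ, enorm x = 1 := by
  refine ⟨(Pi.single (Classical.arbitrary k) (1 : ℝ) : k → ℝ), ?_⟩
  rw [enorm]
  have h : ∑ j, (Pi.single (Classical.arbitrary k) (1 : ℝ) : k → ℝ) j ^ 2 = 1 := by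
    rw [Finset.sum_eq_single (Classical.arbitrary k)]
    · simp
    · intro b _ hb; simp [Pi.single_apply, hb]
    · intro h; exact absurd (Finset.mem_univ _) h
  rw [h, Real.sqrt_one]

lemma enorm_mulVec_le_frob {m k : Type*} [Fintype m] [Fintype k] (M : Matrix m k ℝ)
    {x : k → ℝ} (hx : enorm x = 1) :
    enorm (M.mulVec x) ≤ Real.sqrt (∑ i, ∑ j, M i j ^ 2) := by
  apply Real.sqrt_le_sqrt
  have hx2 : ∑ j, x j ^ 2 = 1 := by
    have := enorm_sq' x; rw [hx] at this; simpa using this.symm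
  calc ∑ i, (M.mulVec x) i ^ 2 ≤ ∑ i, ((∑ j, M i j ^ 2) * ∑ j, x j ^ 2) := by
        apply Finset.sum_le_sum
        intro i _
        exact Finset.sum_mul_sq_le_sq_mul_sq Finset.univ (fun j => M i j) x
    _ = ∑ i, ∑ j, M i j ^ 2 := by simp [hx2]

lemma specNorm_bddAbove {m k : Type*} [Fintype m] [Fintype k] (M : Matrix m k ℝ) :
    BddAbove {r | ∃ x : k → ℝ, enorm x = 1 ∧ r = enorm (M.mulVec x)} := by
  refine ⟨Real.sqrt (∑ i, ∑ j, M i j ^ 2), ?_⟩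
  rintro r ⟨x, hx, rfl⟩
  exact enorm_mulVec_le_frob M hx

lemma specNorm_nonneg {m k : Type*} [Fintype m] [Fintype k] (M : Matrix m k ℝ) :
    0 ≤ specNorm M := by
  apply Real.sSup_nonneg
  rintro r ⟨x, hx, rfl⟩; exact enorm_nonneg' _

lemma sigmaMin_nonneg {m k : Type*} [Fintype m] [Fintype k] (M : Matrix m k ℝ) :
    0 ≤ sigmaMin M := by
  apply Real.sInf_nonneg
  rintro r ⟨x, hx, rfl⟩; exact enorm_nonneg' _

lemma le_specNorm {m k : Type*} [Fintype m] [Fintype k] (M : Matrix m k ℝ)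
    {x : k → ℝ} (hx : enorm x = 1) : enorm (M.mulVec x) ≤ specNorm M :=
  le_csSup (specNorm_bddAbove M) ⟨x, hx, rfl⟩

lemma enorm_mulVec_le {m k : Type*} [Fintype m] [Fintype k] (M : Matrix m k ℝ) (x : k → ℝ) :
    enorm (M.mulVec x) ≤ specNorm M * enorm x := by
  by_cases hx : x = 0
  · subst hx
    rw [Matrix.mulVec_zero, enorm_zero', enorm_zero', mul_zero]
  · have h0 : enorm x ≠ 0 := fun h => hx (eq_zero_of_enorm_eq_zero h)
    have hu := le_specNorm M (unit_of_ne_zero hx)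
    rw [Matrix.mulVec_smul, enorm_smul', abs_inv, abs_of_nonneg (enorm_nonneg' x)] at hu
    have hpos : 0 < enorm x := lt_of_le_of_ne (enorm_nonneg' x) (Ne.symm h0)
    calc enorm (M.mulVec x) = (enorm x)⁻¹ * enorm (M.mulVec x) * enorm x := by field_simp
      _ ≤ specNorm M * enorm x := mul_le_mul_of_nonneg_right hu (enorm_nonneg' x)

lemma sigmaMin_mul_enorm_le {m k : Type*} [Fintype m] [Fintype k]
    (M : Matrix m k ℝ) (x : k → ℝ) :
    sigmaMin M * enorm x ≤ enorm (M.mulVec x) := by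
  by_cases hx : x = 0
  · subst hx
    rw [enorm_zero', mul_zero, Matrix.mulVec_zero]
    exact enorm_nonneg' _
  · have hu : sigmaMin M ≤ enorm (M.mulVec ((enorm x)⁻¹ • x)) :=
      csInf_le ⟨0, by rintro r ⟨y, hy, rfl⟩; exact enorm_nonneg' _⟩ ⟨_, unit_of_ne_zero hx, rfl⟩
    rw [Matrix.mulVec_smul, enorm_smul', abs_inv, abs_of_nonneg (enorm_nonneg' x)] at hu
    have h0 : enorm x ≠ 0 := fun h => hx (eq_zero_of_enorm_eq_zero h)
    have hpos : 0 < enorm x := lt_of_le_of_ne (enorm_nonneg' x) (Ne.symm h0)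
    calc sigmaMin M * enorm x ≤ (enorm x)⁻¹ * enorm (M.mulVec x) * enorm x :=
          mul_le_mul_of_nonneg_right hu (enorm_nonneg' x)
      _ = enorm (M.mulVec x) := by field_simp

lemma dotProduct_eq_sum_sq {m : Type*} [Fintype m] (x : m → ℝ) :
    x ⬝ᵥ x = ∑ i, x i ^ 2 := by
  simp [dotProduct, sq]

lemma dot_gram {m k : Type*} [Fintype m] [Fintype k] (M : Matrix m k ℝ) (z : k → ℝ) :
    z ⬝ᵥ ((Mᵀ * M) *ᵥ z) = (M *ᵥ z) ⬝ᵥ (M *ᵥ z) := by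
  rw [← Matrix.mulVec_mulVec, Matrix.dotProduct_mulVec, Matrix.vecMul_transpose]

lemma gram_isUnit {m k : Type*} [Fintype m] [Fintype k] [DecidableEq k]
    {M : Matrix m k ℝ} (hinj : Function.Injective M.mulVec) :
    IsUnit (Mᵀ * M).det := by
  rw [← Matrix.isUnit_iff_isUnit_det, ← Matrix.mulVec_injective_iff_isUnit]
  intro x y hxy
  have h : (Mᵀ * M) *ᵥ (x - y) = 0 := by
    rw [Matrix.mulVec_sub, hxy, sub_self]
  have h2 : (M *ᵥ (x - y)) ⬝ᵥ (M *ᵥ (x - y)) = 0 := by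
    rw [← dot_gram, h, dotProduct_zero]
  have h3 : M *ᵥ (x - y) = 0 := dotProduct_self_eq_zero.mp h2
  rw [Matrix.mulVec_sub] at h3
  exact hinj (sub_eq_zero.mp h3)

lemma pinv_mul {m k : Type*} [Fintype m] [Fintype k] [DecidableEq k]
    {M : Matrix m k ℝ} (hinj : Function.Injective M.mulVec) :
    pinv M * M = 1 := by
  rw [pinv, Matrix.mul_assoc, Matrix.nonsing_inv_mul _ (gram_isUnit hinj)]

lemma pinv_mulVec_mulVec {m k : Type*} [Fintype m] [Fintype k] [DecidableEq k]
    {M : Matrix m k ℝ} (hinj : Function.Injective M.mulVec) (x : k → ℝ) :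
    (pinv M) *ᵥ (M *ᵥ x) = x := by
  rw [Matrix.mulVec_mulVec, pinv_mul hinj, Matrix.one_mulVec]

lemma proj_symm {m k : Type*} [Fintype m] [Fintype k] [DecidableEq k]
    (M : Matrix m k ℝ) : (M * pinv M)ᵀ = M * pinv M := by
  rw [pinv, Matrix.transpose_mul, Matrix.transpose_mul, Matrix.transpose_transpose,
    Matrix.transpose_nonsing_inv, Matrix.transpose_mul, Matrix.transpose_transpose,
    ← Matrix.mul_assoc]

lemma proj_idem {m k : Type*} [Fintype m] [Fintype k] [DecidableEq k]
    {M : Matrix m k ℝ} (hinj : Function.Injective M.mulVec) :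
    (M * pinv M) * (M * pinv M) = M * pinv M := by
  rw [Matrix.mul_assoc, show pinv M * (M * pinv M) = (pinv M * M) * pinv M from
    (Matrix.mul_assoc _ _ _).symm, pinv_mul hinj, Matrix.one_mul]

lemma proj_contract {m k : Type*} [Fintype m] [Fintype k] [DecidableEq k]
    {M : Matrix m k ℝ} (hinj : Function.Injective M.mulVec) (w : m → ℝ) :
    enorm (w - (M * pinv M) *ᵥ w) ≤ enorm w := by
  set P := M * pinv M with hP
  have hPt : Pᵀ = P := proj_symm M
  have hPP : P * P = P := proj_idem hinj
  have hswap : P *ᵥ w = w ᵥ* P := by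
    conv_rhs => rw [← hPt]
    exact (Matrix.vecMul_transpose P w).symm
  have hyy : (P *ᵥ w) ⬝ᵥ (P *ᵥ w) = w ⬝ᵥ (P *ᵥ w) := by
    calc (P *ᵥ w) ⬝ᵥ (P *ᵥ w) = ((P *ᵥ w) ᵥ* P) ⬝ᵥ w := Matrix.dotProduct_mulVec _ _ _
      _ = (w ᵥ* P ᵥ* P) ⬝ᵥ w := by rw [hswap]
      _ = (w ᵥ* P) ⬝ᵥ w := by rw [Matrix.vecMul_vecMul, hPP]
      _ = w ⬝ᵥ (P *ᵥ w) := by rw [Matrix.dotProduct_mulVec]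
  have key : (w - P *ᵥ w) ⬝ᵥ (w - P *ᵥ w) = w ⬝ᵥ w - w ⬝ᵥ (P *ᵥ w) := by
    rw [sub_dotProduct, dotProduct_sub, dotProduct_sub,
      dotProduct_comm (P *ᵥ w) w, hyy]
    ring
  have hy0 : 0 ≤ w ⬝ᵥ (P *ᵥ w) := by
    rw [← hyy, dotProduct_eq_sum_sq]
    exact Finset.sum_nonneg fun i _ => sq_nonneg _
  apply Real.sqrt_le_sqrt
  rw [← dotProduct_eq_sum_sq, ← dotProduct_eq_sum_sq, key]
  linarith

lemma sigmaMin_pos {m k : Type*} [Fintype m] [Fintype k] [DecidableEq k] [Nonempty k]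
    {M : Matrix m k ℝ} (hinj : Function.Injective M.mulVec) : 0 < sigmaMin M := by
  obtain ⟨u, hu⟩ := exists_unit (k := k)
  set s := specNorm (pinv M) with hs
  have hgen : ∀ x : k → ℝ, enorm x = 1 → 1 ≤ s * enorm (M *ᵥ x) := by
    intro x hx
    have h1 : enorm ((pinv M) *ᵥ (M *ᵥ x)) ≤ s * enorm (M *ᵥ x) := enorm_mulVec_le _ _
    rw [pinv_mulVec_mulVec hinj, hx] at h1
    exact h1
  have hspos : 0 < s := by
    by_contra hns
    push_neg at hns
    have h1 := hgen u hu
    have h2 : s * enorm (M *ᵥ u) ≤ 0 :=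
      mul_nonpos_of_nonpos_of_nonneg hns (enorm_nonneg' _)
    linarith
  have hne : {r | ∃ x : k → ℝ, enorm x = 1 ∧ r = enorm (M.mulVec x)}.Nonempty :=
    ⟨enorm (M *ᵥ u), u, hu, rfl⟩
  have hlow : s⁻¹ ≤ sigmaMin M := by
    rw [sigmaMin]
    apply le_csInf hne
    rintro r ⟨x, hx, rfl⟩
    have h1 := hgen x hx
    rw [inv_eq_one_div, div_le_iff₀ hspos]
    linarith [mul_comm s (enorm (M *ᵥ x))]
  exact lt_of_lt_of_le (inv_pos.mpr hspos) hlow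

/-! ### Block lemmas -/

lemma blk_mulVec (M : Matrix (Fin p × Fin n) (Fin n) ℝ) (w : Fin n → ℝ) (i : Fin p) :
    blk (M *ᵥ w) i = (rowBlk M i) *ᵥ w := rfl

lemma rowBlk_zeroB (Λ : Finset (Fin p)) (Φ : Matrix (Fin p × Fin n) (Fin n) ℝ) (i : Fin p) :
    rowBlk (zeroB Λ Φ) i = if i ∈ Λ then rowBlk Φ i else 0 := by
  funext j k'
  by_cases h : i ∈ Λ <;> simp [rowBlk, zeroB, h]

lemma blk_zeroV (Λ : Finset (Fin p)) (z : Fin p × Fin n → ℝ) (i : Fin p) :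
    blk (zeroV Λ z) i = if i ∈ Λ then blk z i else 0 := by
  funext j
  by_cases h : i ∈ Λ <;> simp [blk, zeroV, h]

lemma blk_add (a b : Fin p × Fin n → ℝ) (i : Fin p) :
    blk (a + b) i = blk a i + blk b i := rfl

lemma blk_sub (a b : Fin p × Fin n → ℝ) (i : Fin p) :
    blk (a - b) i = blk a i - blk b i := rfl

lemma mem_blockSupp {z : Fin p × Fin n → ℝ} {i : Fin p} :
    i ∈ blockSupp z ↔ blk z i ≠ 0 := by
  simp [blockSupp]

lemma zeroV_add (Λ : Finset (Fin p)) (a b : Fin p × Fin n → ℝ) :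
    zeroV Λ (a + b) = zeroV Λ a + zeroV Λ b := by
  funext ij
  by_cases h : ij.1 ∈ Λ <;> simp [zeroV, h]

lemma zeroV_mulVec (Λ : Finset (Fin p)) (Φ : Matrix (Fin p × Fin n) (Fin n) ℝ)
    (x : Fin n → ℝ) : zeroV Λ (Φ *ᵥ x) = (zeroB Λ Φ) *ᵥ x := by
  funext ij
  by_cases h : ij.1 ∈ Λ <;> simp [zeroV, zeroB, Matrix.mulVec, dotProduct, h]

lemma zeroV_eq_zero {Λ : Finset (Fin p)} {z : Fin p × Fin n → ℝ}
    (h : ∀ i ∈ Λ, blk z i = 0) : zeroV Λ z = 0 := by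
  funext ij
  by_cases hm : ij.1 ∈ Λ
  · have := congrFun (h ij.1 hm) ij.2
    simpa [zeroV, hm, blk] using this
  · simp [zeroV, hm]

lemma enorm_blk_le (w : Fin p × Fin n → ℝ) (i : Fin p) :
    enorm (blk w i) ≤ enorm w := by
  apply Real.sqrt_le_sqrt
  rw [Fintype.sum_prod_type]
  have h : (∑ j, blk w i j ^ 2) = ∑ j, w (i, j) ^ 2 := rfl
  rw [h]
  exact Finset.single_le_sum (f := fun i' => ∑ j, w (i', j) ^ 2)
    (fun i' _ => Finset.sum_nonneg fun j _ => sq_nonneg _) (Finset.mem_univ i)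

lemma enorm_le_of_blk {w : Fin p × Fin n → ℝ} {Λ : Finset (Fin p)} {c : ℝ} (hc : 0 ≤ c)
    (h0 : ∀ i ∉ Λ, blk w i = 0) (h : ∀ i ∈ Λ, enorm (blk w i) ≤ c) :
    enorm w ≤ Real.sqrt (Λ.card) * c := by
  have hrw : Real.sqrt (Λ.card : ℝ) * c = Real.sqrt ((Λ.card : ℝ) * c ^ 2) := by
    rw [Real.sqrt_mul (by positivity), Real.sqrt_sq hc]
  rw [hrw]
  apply Real.sqrt_le_sqrt
  rw [Fintype.sum_prod_type]
  calc ∑ i, ∑ j, w (i, j) ^ 2 = ∑ i, enorm (blk w i) ^ 2 := by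
        refine Finset.sum_congr rfl fun i _ => ?_
        rw [enorm_sq']
        rfl
    _ = ∑ i ∈ Λ, enorm (blk w i) ^ 2 := by
        symm
        apply Finset.sum_subset (Finset.subset_univ Λ)
        intro i _ hi
        rw [h0 i hi, enorm_zero']
        norm_num
    _ ≤ ∑ _i ∈ Λ, c ^ 2 := Finset.sum_le_sum fun i hi => by
        have h1 := h i hi
        have h2 := enorm_nonneg' (blk w i)
        nlinarith
    _ = (Λ.card : ℝ) * c ^ 2 := by
        rw [Finset.sum_const, nsmul_eq_mul]

lemma l0n_le_card {z : Fin p × Fin n → ℝ} : l0n z ≤ p := by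
  rw [l0n]
  calc (blockSupp z).card ≤ Finset.univ.card := Finset.card_le_univ _
    _ = p := by simp

/-! ### Consequences of error correctability -/

lemma eq_zero_of_correctable {Φ : Matrix (Fin p × Fin n) (Fin n) ℝ} {q : ℕ}
    (hc : ErrCorrectable Φ q) (x : Fin n → ℝ) (h : l0n (Φ.mulVec x) ≤ 2 * q) :
    x = 0 := by
  set w := Φ.mulVec x with hw
  set S := blockSupp w with hS
  have hScard : S.card ≤ 2 * q := h
  obtain ⟨S₁, hS₁sub, hS₁card⟩ :=
    Finset.exists_subset_card_eq (show min q S.card ≤ S.card from min_le_right _ _)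
  set e₂ := zeroV S₁ w with he₂
  set e₁ := e₂ - w with he₁
  have hsp₂ : Sparse q e₂ := by
    rw [Sparse, l0n]
    calc (blockSupp e₂).card ≤ S₁.card := by
          apply Finset.card_le_card
          intro i hi
          rw [mem_blockSupp] at hi
          by_contra hni
          apply hi
          rw [he₂, blk_zeroV, if_neg hni]
      _ ≤ q := by rw [hS₁card]; exact min_le_left _ _
  have hsp₁ : Sparse q e₁ := by
    rw [Sparse, l0n]
    have hsub : blockSupp e₁ ⊆ S \ S₁ := by
      intro i hi
      rw [mem_blockSupp] at hi
      rw [Finset.mem_sdiff]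
      constructor
      · by_contra hni
        apply hi
        have hwi : blk w i = 0 := by
          by_contra hne
          exact hni (mem_blockSupp.mpr hne)
        have hni1 : i ∉ S₁ := fun hmem => hni (hS₁sub hmem)
        rw [he₁, blk_sub, he₂, blk_zeroV, if_neg hni1, hwi, sub_self]
      · intro hi1
        apply hi
        rw [he₁, blk_sub, he₂, blk_zeroV, if_pos hi1, sub_self]
    calc (blockSupp e₁).card ≤ (S \ S₁).card := Finset.card_le_card hsub
      _ = S.card - S₁.card := Finset.card_sdiff_of_subset hS₁sub
      _ ≤ q := by omega
  have heq : Φ.mulVec x + e₁ = Φ.mulVec 0 + e₂ := by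
    rw [Matrix.mulVec_zero, zero_add, he₁, ← hw]
    abel
  exact hc x 0 e₁ e₂ hsp₁ hsp₂ heq

lemma zeroB_injective {Φ : Matrix (Fin p × Fin n) (Fin n) ℝ} {q : ℕ}
    (hc : ErrCorrectable Φ q) {Λ : Finset (Fin p)} (hcard : p ≤ Λ.card + 2 * q) :
    Function.Injective (zeroB Λ Φ).mulVec := by
  intro a b hab
  have hd : (zeroB Λ Φ) *ᵥ (a - b) = 0 := by
    rw [Matrix.mulVec_sub, hab, sub_self]
  have hsupp : blockSupp (Φ.mulVec (a - b)) ⊆ Λᶜ := by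
    intro i hi
    rw [mem_blockSupp] at hi
    rw [Finset.mem_compl]
    intro hiΛ
    apply hi
    have h1 : blk ((zeroB Λ Φ) *ᵥ (a - b)) i = 0 := by rw [hd]; rfl
    rw [blk_mulVec, rowBlk_zeroB, if_pos hiΛ] at h1
    rw [blk_mulVec]
    exact h1
  have hl0 : l0n (Φ.mulVec (a - b)) ≤ 2 * q := by
    rw [l0n]
    calc (blockSupp (Φ.mulVec (a - b))).card ≤ Λᶜ.card := Finset.card_le_card hsupp
      _ = p - Λ.card := by rw [Finset.card_compl]; simp
      _ ≤ 2 * q := by omega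
  have := eq_zero_of_correctable hc (a - b) hl0
  exact sub_eq_zero.mp this

/-! ### Finiteness helpers -/

lemma finite_finset_image {α β : Type*} [Fintype α] (P : Finset α → Prop) (f : Finset α → β) :
    {r | ∃ Λ : Finset α, P Λ ∧ r = f Λ}.Finite := by
  have hsub : {r | ∃ Λ : Finset α, P Λ ∧ r = f Λ} ⊆ f '' Set.univ := by
    rintro r ⟨Λ, _, rfl⟩
    exact ⟨Λ, trivial, rfl⟩
  exact (Set.finite_univ.image f).subset hsub

lemma finite_elem_image {α β : Type*} [Fintype α] (S : Finset α) (f : α → β) :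
    {c | ∃ i ∈ S, c = f i}.Finite := by
  have hsub : {c | ∃ i ∈ S, c = f i} ⊆ f '' Set.univ := by
    rintro c ⟨i, _, rfl⟩
    exact ⟨i, trivial, rfl⟩
  exact (Set.finite_univ.image f).subset hsub

lemma eta'_nonneg (Φ : Matrix (Fin p × Fin n) (Fin n) ℝ) (q r : ℕ) : 0 ≤ eta' Φ q r := by
  apply Real.sSup_nonneg
  rintro a ⟨Λ, hΛ, rfl⟩
  apply Real.sInf_nonneg
  rintro b ⟨Λ', hsub, hcard, rfl⟩
  apply Real.sSup_nonneg
  rintro c ⟨i, hi, rfl⟩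
  exact specNorm_nonneg _

lemma finite_of_param {ι β : Type*} [Fintype ι] (s : Set β) (f : ι → β)
    (h : ∀ b ∈ s, ∃ i, b = f i) : s.Finite := by
  apply (Set.finite_univ.image f).subset
  rintro b hb
  obtain ⟨i, hi⟩ := h b hb
  exact ⟨i, trivial, hi.symm⟩

lemma theta_nonneg (Φ : Matrix (Fin p × Fin n) (Fin n) ℝ) (q r : ℕ) : 0 ≤ theta Φ q r :=
  le_trans (Real.sqrt_nonneg _) (le_max_right _ _)

end SecureEst

open SecureEst in
/-- Theorem 3.(ii): any minimizer `xhat ∈ F_{p,r}(zhat)` of the count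
`|{i : ‖zhatᵢ − Φ_{Γᵢⁿ}χ‖₂ > v'_max}|` satisfies `‖xhat − x‖₂ ≤ κ^c_{p,q,r}(Φ) v_max`. -/
theorem relaxed_l0_error_bound {n p : ℕ}
    (Φ : Matrix (Fin p × Fin n) (Fin n) ℝ) (q r : ℕ)
    (hc : ErrCorrectable Φ q) (hqr : q ≤ r) (hr2q : r ≤ 2 * q)
    (x : Fin n → ℝ) (e v : Fin p × Fin n → ℝ) (vmax : ℝ)
    (he : Sparse q e) (hv : ∀ i : Fin p, SecureEst.enorm (blk v i) ≤ vmax)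
    (zhat : Fin p × Fin n → ℝ) (hz : zhat = Φ.mulVec x + e + v)
    (xhat : Fin n → ℝ)
    (hmem : xhat ∈ Fset Φ r zhat)
    (hmin : ∀ χ ∈ Fset Φ r zhat,
      (Finset.univ.filter fun i : Fin p =>
          theta Φ q r * vmax < SecureEst.enorm (blk zhat i - (rowBlk Φ i).mulVec xhat)).card ≤
        (Finset.univ.filter fun i : Fin p =>
          theta Φ q r * vmax < SecureEst.enorm (blk zhat i - (rowBlk Φ i).mulVec χ)).card) :
    SecureEst.enorm (xhat - x) ≤ kappaC Φ q r * vmax := by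
  classical
  by_cases hn : n = 0
  · subst hn
    have hL : SecureEst.enorm (xhat - x) = 0 := by rw [SecureEst.enorm]; simp
    rw [hL]
    have hsig : ∀ Λ : Finset (Fin p), sigmaMin (zeroB Λ Φ) = 0 := by
      intro Λ
      rw [sigmaMin]
      have hempty : {s | ∃ y : Fin 0 → ℝ, SecureEst.enorm y = 1 ∧
          s = SecureEst.enorm ((zeroB Λ Φ).mulVec y)} = ∅ := by
        ext s
        simp only [Set.mem_setOf_eq, Set.mem_empty_iff_false, iff_false, not_exists]
        intro y hy
        rw [SecureEst.enorm] at hy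
        simp at hy
      rw [hempty, Real.sInf_empty]
    have hrho : rho Φ (2 * q) = 0 := by
      rw [rho]
      have hset : {s | ∃ Λ : Finset (Fin p), Λ.card = p - 2 * q ∧
          s = sigmaMin (zeroB Λ Φ)} = {0} := by
        ext s
        simp only [Set.mem_setOf_eq, Set.mem_singleton_iff]
        constructor
        · rintro ⟨Λ, _, rfl⟩; exact hsig Λ
        · rintro rfl
          obtain ⟨Λ, _, hcard⟩ := Finset.exists_subset_card_eq
            (show p - 2 * q ≤ (Finset.univ : Finset (Fin p)).card from by
              rw [Finset.card_univ, Fintype.card_fin]; omega)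
          exact ⟨Λ, hcard, (hsig Λ).symm⟩
      rw [hset, csInf_singleton]
    rw [kappaC, hrho, div_zero, zero_mul]
  by_cases hp : p ≤ 2 * q
  · exfalso
    have hx1 : (fun _ : Fin n => (1 : ℝ)) = 0 :=
      eq_zero_of_correctable hc _ (le_trans l0n_le_card hp)
    have h10 := congrFun hx1 ⟨0, Nat.pos_of_ne_zero hn⟩
    simp at h10
  push_neg at hp
  haveI : Nonempty (Fin n) := ⟨⟨0, Nat.pos_of_ne_zero hn⟩⟩
  have hppos : 0 < p := by omega
  have hvmax : 0 ≤ vmax := le_trans (enorm_nonneg' _) (hv ⟨0, hppos⟩)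
  have hl0e : (blockSupp e).card ≤ q := he
  obtain ⟨Λc, hΛcsub, hΛccard⟩ := Finset.exists_subset_card_eq
    (show p - q ≤ (blockSupp e)ᶜ.card from by
      rw [Finset.card_compl, Fintype.card_fin]; omega)
  have heΛc : ∀ i ∈ Λc, blk e i = 0 := by
    intro i hi
    have hmem := hΛcsub hi
    rw [Finset.mem_compl, mem_blockSupp] at hmem
    exact not_not.mp hmem
  -- the eta' machinery
  set innerSet := {b | ∃ Λ' : Finset (Fin p), Λ' ⊆ Λc ∧ Λ'.card = p - r ∧
      b = sSup {c | ∃ i ∈ Λc \ Λ',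
        c = specNorm (rowBlk Φ i * pinv (zeroB Λ' Φ))}} with hinnerSet
  have hinner_ne : innerSet.Nonempty := by
    obtain ⟨Λ', hsub, hcard⟩ := Finset.exists_subset_card_eq
      (show p - r ≤ Λc.card from by omega)
    exact ⟨_, Λ', hsub, hcard, rfl⟩
  have hinner_fin : innerSet.Finite := by
    apply finite_of_param _ (fun Λ' : Finset (Fin p) =>
      sSup {c | ∃ i ∈ Λc \ Λ', c = specNorm (rowBlk Φ i * pinv (zeroB Λ' Φ))})
    rintro b ⟨Λ', _, _, rfl⟩
    exact ⟨Λ', rfl⟩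
  obtain ⟨Λbar, hΛbarsub, hΛbarcard, hab⟩ := hinner_ne.csInf_mem hinner_fin
  have haeta : sInf innerSet ≤ eta' Φ q r := by
    rw [eta']
    apply le_csSup
    · apply Set.Finite.bddAbove
      apply finite_of_param _ (fun Λ : Finset (Fin p) =>
        sInf {b | ∃ Λ' : Finset (Fin p), Λ' ⊆ Λ ∧ Λ'.card = p - r ∧
          b = sSup {c | ∃ i ∈ Λ \ Λ',
            c = specNorm (rowBlk Φ i * pinv (zeroB Λ' Φ))}})
      rintro a ⟨Λ, _, rfl⟩
      exact ⟨Λ, rfl⟩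
    · exact ⟨Λc, hΛccard, rfl⟩
  have hspec : ∀ i ∈ Λc \ Λbar,
      specNorm (rowBlk Φ i * pinv (zeroB Λbar Φ)) ≤ eta' Φ q r := by
    intro i hi
    have h1 : specNorm (rowBlk Φ i * pinv (zeroB Λbar Φ)) ≤
        sSup {c | ∃ i ∈ Λc \ Λbar, c = specNorm (rowBlk Φ i * pinv (zeroB Λbar Φ))} := by
      apply le_csSup
      · apply Set.Finite.bddAbove
        apply finite_of_param _ (fun i : Fin p =>
          specNorm (rowBlk Φ i * pinv (zeroB Λbar Φ)))
        rintro c ⟨i', _, rfl⟩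
        exact ⟨i', rfl⟩
      · exact ⟨i, hi, rfl⟩
    rw [← hab] at h1
    exact le_trans h1 haeta
  have hinjbar : Function.Injective (zeroB Λbar Φ).mulVec :=
    zeroB_injective hc (by rw [hΛbarcard]; omega)
  set M := zeroB Λbar Φ with hMdef
  set vb := zeroV Λbar v with hvbdef
  set chi := (pinv M).mulVec (zeroV Λbar zhat) with hchidef
  have hchiF : chi ∈ Fset Φ r zhat := ⟨Λbar, hΛbarcard, rfl⟩
  have hzdecomp : zeroV Λbar zhat = M *ᵥ x + vb := by
    rw [hz, zeroV_add, zeroV_add, zeroV_mulVec,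
      zeroV_eq_zero (fun i hi => heΛc i (hΛbarsub hi)), add_zero]
  have hchix : chi = x + (pinv M) *ᵥ vb := by
    rw [hchidef, hzdecomp, Matrix.mulVec_add, pinv_mulVec_mulVec hinjbar]
  have hresid_chi : ∀ i, blk zhat i - (rowBlk Φ i).mulVec chi
      = blk e i + blk v i - (rowBlk Φ i) *ᵥ ((pinv M) *ᵥ vb) := by
    intro i
    rw [hchix, Matrix.mulVec_add, hz, blk_add, blk_add, blk_mulVec]
    abel
  have hvbnorm : SecureEst.enorm vb ≤ Real.sqrt ((p - r : ℕ) : ℝ) * vmax := by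
    have h := enorm_le_of_blk (w := vb) (Λ := Λbar) hvmax
      (fun i hi => by rw [hvbdef, blk_zeroV, if_neg hi])
      (fun i hi => by rw [hvbdef, blk_zeroV, if_pos hi]; exact hv i)
    rwa [hΛbarcard] at h
  have hth1 : Real.sqrt ((p - r : ℕ) : ℝ) ≤ theta Φ q r := le_max_right _ _
  have hth2 : eta' Φ q r * Real.sqrt ((p - r : ℕ) : ℝ) + 1 ≤ theta Φ q r := le_max_left _ _
  have hres_chi_le : ∀ i ∈ Λc,
      SecureEst.enorm (blk zhat i - (rowBlk Φ i).mulVec chi) ≤ theta Φ q r * vmax := by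
    intro i hic
    have hei : blk e i = 0 := heΛc i hic
    by_cases hib : i ∈ Λbar
    · have hrb : rowBlk Φ i = rowBlk M i := by
        rw [hMdef, rowBlk_zeroB, if_pos hib]
      have hexpr : blk zhat i - (rowBlk Φ i).mulVec chi
          = blk (vb - (M * pinv M) *ᵥ vb) i := by
        rw [hresid_chi i, hei, zero_add, blk_sub]
        congr 1
        · rw [hvbdef, blk_zeroV, if_pos hib]
        · rw [hrb, ← blk_mulVec, Matrix.mulVec_mulVec]
      rw [hexpr]
      calc SecureEst.enorm (blk (vb - (M * pinv M) *ᵥ vb) i)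
          ≤ SecureEst.enorm (vb - (M * pinv M) *ᵥ vb) := enorm_blk_le _ _
        _ ≤ SecureEst.enorm vb := proj_contract hinjbar vb
        _ ≤ Real.sqrt ((p - r : ℕ) : ℝ) * vmax := hvbnorm
        _ ≤ theta Φ q r * vmax := mul_le_mul_of_nonneg_right hth1 hvmax
    · have hid : i ∈ Λc \ Λbar := Finset.mem_sdiff.mpr ⟨hic, hib⟩
      have hsp := hspec i hid
      have hexpr : blk zhat i - (rowBlk Φ i).mulVec chi
          = blk v i - (rowBlk Φ i * pinv M) *ᵥ vb := by
        rw [hresid_chi i, hei, zero_add, Matrix.mulVec_mulVec]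
      rw [hexpr]
      calc SecureEst.enorm (blk v i - (rowBlk Φ i * pinv M) *ᵥ vb)
          ≤ SecureEst.enorm (blk v i) + SecureEst.enorm ((rowBlk Φ i * pinv M) *ᵥ vb) := enorm_sub_le' _ _
        _ ≤ vmax + specNorm (rowBlk Φ i * pinv M) * SecureEst.enorm vb :=
            add_le_add (hv i) (enorm_mulVec_le _ _)
        _ ≤ vmax + eta' Φ q r * (Real.sqrt ((p - r : ℕ) : ℝ) * vmax) := by
            apply add_le_add_right
            exact mul_le_mul hsp hvbnorm (enorm_nonneg' _) (eta'_nonneg Φ q r)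
        _ ≤ theta Φ q r * vmax := by
            nlinarith [mul_le_mul_of_nonneg_right hth2 hvmax]
  have hcount_chi : (Finset.univ.filter fun i : Fin p =>
      theta Φ q r * vmax < SecureEst.enorm (blk zhat i - (rowBlk Φ i).mulVec chi)).card ≤ q := by
    have hsub : (Finset.univ.filter fun i : Fin p =>
        theta Φ q r * vmax < SecureEst.enorm (blk zhat i - (rowBlk Φ i).mulVec chi)) ⊆ Λcᶜ := by
      intro i hi
      rw [Finset.mem_filter] at hi
      rw [Finset.mem_compl]
      intro hic
      exact absurd hi.2 (not_lt.mpr (hres_chi_le i hic))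
    calc (Finset.univ.filter fun i : Fin p =>
        theta Φ q r * vmax < SecureEst.enorm (blk zhat i - (rowBlk Φ i).mulVec chi)).card
        ≤ Λcᶜ.card := Finset.card_le_card hsub
      _ ≤ q := by rw [Finset.card_compl, Fintype.card_fin, hΛccard]; omega
  have hxcount : (Finset.univ.filter fun i : Fin p =>
      theta Φ q r * vmax < SecureEst.enorm (blk zhat i - (rowBlk Φ i).mulVec xhat)).card ≤ q :=
    le_trans (hmin chi hchiF) hcount_chi
  set Bset := Finset.univ.filter (fun i : Fin p =>
    ¬ (theta Φ q r * vmax < SecureEst.enorm (blk zhat i - (rowBlk Φ i).mulVec xhat))) with hBdef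
  have hBcard : (Finset.univ.filter fun i : Fin p =>
      theta Φ q r * vmax < SecureEst.enorm (blk zhat i - (rowBlk Φ i).mulVec xhat)).card
      + Bset.card = p := by
    rw [hBdef, Finset.card_filter_add_card_filter_not, Finset.card_univ,
      Fintype.card_fin]
  have hunion : (Λc ∪ Bset).card ≤ p := by
    calc (Λc ∪ Bset).card ≤ (Finset.univ : Finset (Fin p)).card := Finset.card_le_univ _
      _ = p := by rw [Finset.card_univ, Fintype.card_fin]
  have hGcard : p - 2 * q ≤ (Λc ∩ Bset).card := by
    have h1 := Finset.card_inter_add_card_union Λc Bset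
    omega
  obtain ⟨Λs, hΛssub, hΛscard⟩ := Finset.exists_subset_card_eq hGcard
  set d := xhat - x with hddef
  have hblockbound : ∀ i ∈ Λs, SecureEst.enorm ((rowBlk Φ i) *ᵥ d) ≤ theta Φ q r * vmax + vmax := by
    intro i hi
    have hic : i ∈ Λc := (Finset.mem_inter.mp (hΛssub hi)).1
    have hibs : i ∈ Bset := (Finset.mem_inter.mp (hΛssub hi)).2
    have hres : SecureEst.enorm (blk zhat i - (rowBlk Φ i).mulVec xhat) ≤ theta Φ q r * vmax := by
      rw [hBdef, Finset.mem_filter] at hibs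
      exact not_lt.mp hibs.2
    have hei : blk e i = 0 := heΛc i hic
    have hexpr : (rowBlk Φ i) *ᵥ d
        = blk v i - (blk zhat i - (rowBlk Φ i).mulVec xhat) := by
      rw [hddef, Matrix.mulVec_sub, hz, blk_add, blk_add, blk_mulVec, hei]
      abel
    rw [hexpr]
    calc SecureEst.enorm (blk v i - (blk zhat i - (rowBlk Φ i).mulVec xhat))
        ≤ SecureEst.enorm (blk v i) + SecureEst.enorm (blk zhat i - (rowBlk Φ i).mulVec xhat) :=
          enorm_sub_le' _ _
      _ ≤ vmax + theta Φ q r * vmax := add_le_add (hv i) hres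
      _ = theta Φ q r * vmax + vmax := by ring
  have hcnn : 0 ≤ theta Φ q r * vmax + vmax :=
    add_nonneg (mul_nonneg (theta_nonneg Φ q r) hvmax) hvmax
  have hwbound : SecureEst.enorm ((zeroB Λs Φ) *ᵥ d)
      ≤ Real.sqrt ((p - 2 * q : ℕ) : ℝ) * (theta Φ q r * vmax + vmax) := by
    have h := enorm_le_of_blk (w := (zeroB Λs Φ) *ᵥ d) (Λ := Λs) hcnn
      (fun i hi => by rw [blk_mulVec, rowBlk_zeroB, if_neg hi, Matrix.zero_mulVec])
      (fun i hi => by rw [blk_mulVec, rowBlk_zeroB, if_pos hi]; exact hblockbound i hi)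
    rwa [hΛscard] at h
  have hrho_le : rho Φ (2 * q) ≤ sigmaMin (zeroB Λs Φ) := by
    rw [rho]
    apply csInf_le
    · exact ⟨0, by rintro s ⟨Λ, _, rfl⟩; exact sigmaMin_nonneg _⟩
    · exact ⟨Λs, hΛscard, rfl⟩
  have hrho_pos : 0 < rho Φ (2 * q) := by
    have hne : {s | ∃ Λ : Finset (Fin p), Λ.card = p - 2 * q ∧
        s = sigmaMin (zeroB Λ Φ)}.Nonempty := ⟨_, Λs, hΛscard, rfl⟩
    have hfin : {s | ∃ Λ : Finset (Fin p), Λ.card = p - 2 * q ∧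
        s = sigmaMin (zeroB Λ Φ)}.Finite := by
      apply finite_of_param _ (fun Λ : Finset (Fin p) => sigmaMin (zeroB Λ Φ))
      rintro s ⟨Λ, _, rfl⟩
      exact ⟨Λ, rfl⟩
    obtain ⟨Λ1, hΛ1, heq⟩ := hne.csInf_mem hfin
    rw [rho, heq]
    exact sigmaMin_pos (zeroB_injective hc (by rw [hΛ1]; omega))
  have hchain : rho Φ (2 * q) * SecureEst.enorm d
      ≤ Real.sqrt ((p - 2 * q : ℕ) : ℝ) * (theta Φ q r * vmax + vmax) :=
    le_trans (mul_le_mul_of_nonneg_right hrho_le (enorm_nonneg' d))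
      (le_trans (sigmaMin_mul_enorm_le _ _) hwbound)
  rw [kappaC, div_mul_eq_mul_div, le_div_iff₀ hrho_pos]
  calc SecureEst.enorm (xhat - x) * rho Φ (2 * q) = rho Φ (2 * q) * SecureEst.enorm d := by
        rw [hddef]; ring
    _ ≤ Real.sqrt ((p - 2 * q : ℕ) : ℝ) * (theta Φ q r * vmax + vmax) := hchain
    _ = (theta Φ q r + 1) * Real.sqrt ((p - 2 * q : ℕ) : ℝ) * vmax := by ring
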